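/- Let τ ∈ ℂ with τ ≠ 0 and α ∈ ℂ with α ≠ 0. An entire function f : ℂ → ℂ satisfies the equation (τ²/4) f″(w) + τ w f′(w) + (w² + τ/2) f(w) = α² f(w) for all w ∈ ℂ if and only if there exist (necessarily unique) constants a, b ∈ ℂ such that f(w) = a e^{−(w+α)²/τ} + b e^{−(w−α)²/τ} for all w. In particular, the solution is uniquely determined by the boundary data f(0) and f′(0). -/

import Mathlib

open Complex

private lemma exp_pi_half_I : Complex.exp ((↑Real.pi) / 2 * Complex.I) = Complex.I := by
  rw [show ((↑Real.pi : ℂ)) / 2 = ((Real.pi / 2 : ℝ) : ℂ) by push_cast; ring,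
    Complex.exp_mul_I, ← Complex.ofReal_cos, ← Complex.ofReal_sin]
  simp

private lemma deriv_entire {f : ℂ → ℂ} (hf : Differentiable ℂ f) :
    Differentiable ℂ (deriv f) := by
  have h1 : AnalyticOnNhd ℂ f Set.univ := analyticOnNhd_univ_iff_differentiable.2 hf
  exact analyticOnNhd_univ_iff_differentiable.1 h1.deriv

private lemma first_order (c : ℂ) {h : ℂ → ℂ} (hd : Differentiable ℂ h)
    (heq : ∀ w, deriv h w = c * h w) : ∀ w, h w = h 0 * Complex.exp (c * w) := by
  have hgd : ∀ w : ℂ, HasDerivAt (fun w => h w * Complex.exp (-(c * w))) 0 w := by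
    intro w
    have h1 : HasDerivAt (fun w : ℂ => -(c * w)) (-c) w := by
      simpa using ((hasDerivAt_id w).const_mul c).fun_neg
    have h3 := (hd w).hasDerivAt.mul h1.cexp
    refine h3.congr_deriv ?_
    rw [heq w]; ring
  have hconst : ∀ w : ℂ, h w * Complex.exp (-(c * w)) = h 0 * Complex.exp (-(c * 0)) :=
    fun w => is_const_of_deriv_eq_zero (fun x => (hgd x).differentiableAt)
      (fun x => (hgd x).deriv) w 0
  intro w
  have h4 : h w * Complex.exp (-(c * w)) * Complex.exp (c * w)
      = h 0 * Complex.exp (-(c * 0)) * Complex.exp (c * w) := by rw [hconst w]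
  rw [mul_assoc, ← Complex.exp_add] at h4
  simpa using h4

private lemma second_order (c : ℂ) (hc : c ≠ 0) {h : ℂ → ℂ} (hd : Differentiable ℂ h)
    (heq : ∀ w, deriv (deriv h) w = c ^ 2 * h w) :
    ∀ w, h w = (h 0 + (deriv h 0 - c * h 0) / (2 * c)) * Complex.exp (c * w)
      + (-(deriv h 0 - c * h 0) / (2 * c)) * Complex.exp (-(c * w)) := by
  have hd' : Differentiable ℂ (deriv h) := deriv_entire hd
  set u : ℂ → ℂ := fun w => deriv h w - c * h w with hu
  have hud : Differentiable ℂ u := hd'.sub (hd.const_mul c)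
  have hueq : ∀ w, deriv u w = -c * u w := by
    intro w
    have h5 : deriv u w = deriv (deriv h) w - c * deriv h w := by
      rw [hu, deriv_fun_sub (hd' w) ((hd.const_mul c) w), deriv_const_mul c (hd w)]
    rw [h5, heq w]; simp only [hu]; ring
  have hu0 := first_order (-c) hud hueq
  set B : ℂ := -(u 0) / (2 * c) with hB
  have hEneg : ∀ w : ℂ, HasDerivAt (fun w : ℂ => B * Complex.exp (-(c * w)))
      (B * (Complex.exp (-(c * w)) * -c)) w := by
    intro w
    have h1 : HasDerivAt (fun w : ℂ => -(c * w)) (-c) w := by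
      simpa using ((hasDerivAt_id w).const_mul c).fun_neg
    exact h1.cexp.const_mul B
  set v : ℂ → ℂ := fun w => h w - B * Complex.exp (-(c * w)) with hv
  have hvd : Differentiable ℂ v := hd.sub (fun w => (hEneg w).differentiableAt)
  have hveq : ∀ w, deriv v w = c * v w := by
    intro w
    have h5 : deriv v w = deriv h w - B * (Complex.exp (-(c * w)) * -c) := by
      rw [hv, deriv_fun_sub (hd w) (hEneg w).differentiableAt, (hEneg w).deriv]
    have h6 : deriv h w = u w + c * h w := by simp only [hu]; ring
    rw [h5, h6, hu0 w]
    simp only [hv, hB]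
    rw [show (-c) * w = -(c * w) by ring]
    field_simp
    ring
  have hv0 := first_order c hvd hveq
  intro w
  have h8 := hv0 w
  simp only [hv] at h8
  have h9 : h w = (h 0 - B * Complex.exp (-(c * 0))) * Complex.exp (c * w)
      + B * Complex.exp (-(c * w)) := by rw [← h8]; ring
  rw [h9]
  simp only [hB, hu]
  rw [mul_zero, neg_zero, Complex.exp_zero, mul_one]
  ring_nf

private lemma comb_unique (c : ℂ) (hc : c ≠ 0) {A B A' B' : ℂ}
    (h : ∀ w, A * Complex.exp (c * w) + B * Complex.exp (-(c * w))
      = A' * Complex.exp (c * w) + B' * Complex.exp (-(c * w))) : A = A' ∧ B = B' := by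
  have h0 : A + B = A' + B' := by simpa using h 0
  set w0 : ℂ := ((↑Real.pi) / 2 * Complex.I) / c with hw0
  have hcw : c * w0 = (↑Real.pi) / 2 * Complex.I := by
    rw [hw0]; field_simp
  have h1 := h w0
  rw [hcw, exp_pi_half_I, Complex.exp_neg, exp_pi_half_I, Complex.inv_I] at h1
  have hdiff : A - B = A' - B' := by
    apply mul_right_cancel₀ Complex.I_ne_zero
    linear_combination h1
  exact ⟨by linear_combination (h0 + hdiff) / 2, by linear_combination (h0 - hdiff) / 2⟩


private lemma lin_hasDerivAt_sub (τ β : ℂ) (w : ℂ) :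
    HasDerivAt (fun w : ℂ => -2 * (w - β) / τ) (-2 / τ) w := by
  simpa using (((hasDerivAt_id w).sub_const β).const_mul (-2)).div_const τ

private lemma lin_hasDerivAt_add (τ β : ℂ) (w : ℂ) :
    HasDerivAt (fun w : ℂ => -2 * (w + β) / τ) (-2 / τ) w := by
  simpa using (((hasDerivAt_id w).add_const β).const_mul (-2)).div_const τ

private lemma gauss_hasDerivAt_sub (τ β : ℂ) (w : ℂ) :
    HasDerivAt (fun w : ℂ => Complex.exp (-(w - β) ^ 2 / τ))
      (Complex.exp (-(w - β) ^ 2 / τ) * (-2 * (w - β) / τ)) w := by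
  have h1 : HasDerivAt (fun w : ℂ => -(w - β) ^ 2 / τ) (-2 * (w - β) / τ) w := by
    have h2 := (((hasDerivAt_id w).sub_const β).pow 2).neg.div_const τ
    refine h2.congr_deriv ?_
    simp
  exact h1.cexp

private lemma gauss_hasDerivAt_add (τ β : ℂ) (w : ℂ) :
    HasDerivAt (fun w : ℂ => Complex.exp (-(w + β) ^ 2 / τ))
      (Complex.exp (-(w + β) ^ 2 / τ) * (-2 * (w + β) / τ)) w := by
  have h1 : HasDerivAt (fun w : ℂ => -(w + β) ^ 2 / τ) (-2 * (w + β) / τ) w := by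
    have h2 := (((hasDerivAt_id w).add_const β).pow 2).neg.div_const τ
    refine h2.congr_deriv ?_
    simp
  exact h1.cexp

private lemma key_rep (τ : ℂ) (hτ : τ ≠ 0) (α : ℂ) (hα : α ≠ 0)
    (F : ℂ → ℂ) (hF : Differentiable ℂ F)
    (heqn : ∀ w : ℂ, τ ^ 2 / 4 * deriv (deriv F) w + τ * w * deriv F w
      + (w ^ 2 + τ / 2) * F w = α ^ 2 * F w) :
    ∀ w : ℂ, F w =
      (-(deriv F 0 * Complex.exp (α ^ 2 / τ) - (2 * α / τ) * (F 0 * Complex.exp (α ^ 2 / τ)))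
          / (2 * (2 * α / τ))) * Complex.exp (-(w + α) ^ 2 / τ)
      + (F 0 * Complex.exp (α ^ 2 / τ)
          + (deriv F 0 * Complex.exp (α ^ 2 / τ) - (2 * α / τ) * (F 0 * Complex.exp (α ^ 2 / τ)))
            / (2 * (2 * α / τ))) * Complex.exp (-(w - α) ^ 2 / τ) := by
  set c : ℂ := 2 * α / τ with hcdef
  have hc : c ≠ 0 := div_ne_zero (mul_ne_zero two_ne_zero hα) hτ
  set E : ℂ → ℂ := fun w => Complex.exp ((w ^ 2 + α ^ 2) / τ) with hEdef
  have hE : ∀ w : ℂ, HasDerivAt E (E w * (2 * w / τ)) w := by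
    intro w
    have h1 : HasDerivAt (fun w : ℂ => (w ^ 2 + α ^ 2) / τ) (2 * w / τ) w := by
      have h2 := ((hasDerivAt_pow 2 w).add_const (α ^ 2)).div_const τ
      refine h2.congr_deriv ?_
      norm_num
    exact h1.cexp
  set h : ℂ → ℂ := fun w => F w * E w with hhdef
  have hhd : Differentiable ℂ h := hF.mul (fun w => (hE w).differentiableAt)
  have hh1 : ∀ w, HasDerivAt h (deriv F w * E w + F w * (E w * (2 * w / τ))) w :=
    fun w => (hF w).hasDerivAt.mul (hE w)
  have hhderiv : deriv h = fun w => deriv F w * E w + F w * (E w * (2 * w / τ)) :=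
    funext fun w => (hh1 w).deriv
  have hF' : Differentiable ℂ (deriv F) := deriv_entire hF
  have hpoly : ∀ w : ℂ, HasDerivAt (fun w : ℂ => 2 * w / τ) (2 / τ) w := by
    intro w; simpa using ((hasDerivAt_id w).const_mul 2).div_const τ
  have hh2 : ∀ w, deriv (deriv h) w =
      deriv (deriv F) w * E w + deriv F w * (E w * (2 * w / τ))
        + (deriv F w * (E w * (2 * w / τ))
          + F w * (E w * (2 * w / τ) * (2 * w / τ) + E w * (2 / τ))) := by
    intro w
    rw [hhderiv]
    exact (((hF' w).hasDerivAt.mul (hE w)).add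
      ((hF w).hasDerivAt.mul ((hE w).mul (hpoly w)))).deriv
  have hheq : ∀ w, deriv (deriv h) w = c ^ 2 * h w := by
    intro w
    rw [hh2 w]
    have H := heqn w
    have hA : deriv (deriv F) w
        = (α ^ 2 * F w - τ * w * deriv F w - (w ^ 2 + τ / 2) * F w) * 4 / τ ^ 2 := by
      field_simp at H ⊢
      linear_combination H
    rw [hA]
    simp only [hhdef, hcdef]
    field_simp
    ring_nf
  have hE0 : E 0 = Complex.exp (α ^ 2 / τ) := by simp [hEdef]
  have hh0 : h 0 = F 0 * Complex.exp (α ^ 2 / τ) := by rw [hhdef]; simp [hE0]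
  have hdh0 : deriv h 0 = deriv F 0 * Complex.exp (α ^ 2 / τ) := by
    rw [hhderiv]; simp [hE0]
  have hrep := second_order c hc hhd hheq
  have hinv : ∀ w : ℂ, F w = h w * Complex.exp (-((w ^ 2 + α ^ 2) / τ)) := by
    intro w
    simp only [hhdef, hEdef]
    rw [mul_assoc, ← Complex.exp_add]
    simp
  intro w
  have id1 : c * w + -((w ^ 2 + α ^ 2) / τ) = -(w - α) ^ 2 / τ := by
    rw [hcdef]; field_simp; ring
  have id2 : -(c * w) + -((w ^ 2 + α ^ 2) / τ) = -(w + α) ^ 2 / τ := by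
    rw [hcdef]; field_simp; ring
  rw [hinv w, hrep w, add_mul, mul_assoc, mul_assoc, ← Complex.exp_add, ← Complex.exp_add,
    id1, id2, hh0, hdh0]
  ring

private lemma gauss_comb_unique (τ : ℂ) (hτ : τ ≠ 0) (α : ℂ) (hα : α ≠ 0) {a b a' b' : ℂ}
    (h : ∀ w : ℂ, a * Complex.exp (-(w + α) ^ 2 / τ) + b * Complex.exp (-(w - α) ^ 2 / τ)
      = a' * Complex.exp (-(w + α) ^ 2 / τ) + b' * Complex.exp (-(w - α) ^ 2 / τ)) :
    a = a' ∧ b = b' := by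
  have hc : (2 * α / τ) ≠ 0 := div_ne_zero (mul_ne_zero two_ne_zero hα) hτ
  have hmul : ∀ w : ℂ, b * Complex.exp ((2 * α / τ) * w) + a * Complex.exp (-((2 * α / τ) * w))
      = b' * Complex.exp ((2 * α / τ) * w) + a' * Complex.exp (-((2 * α / τ) * w)) := by
    intro w
    have h2 := congrArg (fun z => z * Complex.exp ((w ^ 2 + α ^ 2) / τ)) (h w)
    simp only [add_mul, mul_assoc, ← Complex.exp_add] at h2
    rw [show -(w + α) ^ 2 / τ + (w ^ 2 + α ^ 2) / τ = -((2 * α / τ) * w) by field_simp; ring,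
        show -(w - α) ^ 2 / τ + (w ^ 2 + α ^ 2) / τ = (2 * α / τ) * w by field_simp; ring] at h2
    linear_combination h2
  have := comb_unique (2 * α / τ) hc hmul
  exact ⟨this.2, this.1⟩

private lemma combo_solves (τ : ℂ) (hτ : τ ≠ 0) (α : ℂ) (a b : ℂ) (f : ℂ → ℂ)
    (hfe : f = fun w => a * Complex.exp (-(w + α) ^ 2 / τ) + b * Complex.exp (-(w - α) ^ 2 / τ)) :
    ∀ w : ℂ, τ ^ 2 / 4 * deriv (deriv f) w + τ * w * deriv f w + (w ^ 2 + τ / 2) * f w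
      = α ^ 2 * f w := by
  have d1 : ∀ w : ℂ, HasDerivAt f
      (a * (Complex.exp (-(w + α) ^ 2 / τ) * (-2 * (w + α) / τ))
        + b * (Complex.exp (-(w - α) ^ 2 / τ) * (-2 * (w - α) / τ))) w := by
    intro w
    rw [hfe]
    exact ((gauss_hasDerivAt_add τ α w).const_mul a).add
      ((gauss_hasDerivAt_sub τ α w).const_mul b)
  have hd1 : deriv f = fun w => a * (Complex.exp (-(w + α) ^ 2 / τ) * (-2 * (w + α) / τ))
      + b * (Complex.exp (-(w - α) ^ 2 / τ) * (-2 * (w - α) / τ)) := funext fun w => (d1 w).deriv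
  have d2 : ∀ w : ℂ, deriv (deriv f) w =
      a * (Complex.exp (-(w + α) ^ 2 / τ) * (-2 * (w + α) / τ) * (-2 * (w + α) / τ)
        + Complex.exp (-(w + α) ^ 2 / τ) * (-2 / τ))
      + b * (Complex.exp (-(w - α) ^ 2 / τ) * (-2 * (w - α) / τ) * (-2 * (w - α) / τ)
        + Complex.exp (-(w - α) ^ 2 / τ) * (-2 / τ)) := by
    intro w
    rw [hd1]
    exact ((((gauss_hasDerivAt_add τ α w).mul (lin_hasDerivAt_add τ α w)).const_mul a).add
      (((gauss_hasDerivAt_sub τ α w).mul (lin_hasDerivAt_sub τ α w)).const_mul b)).deriv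
  intro w
  rw [d2 w, hd1, hfe]
  simp only
  field_simp
  ring_nf

/-- For `τ ≠ 0`, `α ≠ 0`: an entire `f` satisfies the `τ`-expression
`(τ²/4) f″ + τ w f′ + (w² + τ/2) f = α² f` of `(α² − w_*²) * f = 0` iff it is a
(unique) linear combination `a e^{−(w+α)²/τ} + b e^{−(w−α)²/τ}`; in particular the
solution is uniquely determined by the boundary data `f(0)` and `f′(0)`. -/
theorem quadratic_eigen_equation_solutions (τ : ℂ) (hτ : τ ≠ 0) (α : ℂ) (hα : α ≠ 0)
    (f : ℂ → ℂ) (hf : Differentiable ℂ f) :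
    ((∀ w : ℂ,
        τ ^ 2 / 4 * deriv (deriv f) w + τ * w * deriv f w + (w ^ 2 + τ / 2) * f w
          = α ^ 2 * f w) ↔
      (∃! p : ℂ × ℂ, ∀ w : ℂ,
        f w = p.1 * Complex.exp (-(w + α) ^ 2 / τ) +
              p.2 * Complex.exp (-(w - α) ^ 2 / τ))) ∧
    (∀ g : ℂ → ℂ, Differentiable ℂ g →
      (∀ w : ℂ,
        τ ^ 2 / 4 * deriv (deriv f) w + τ * w * deriv f w + (w ^ 2 + τ / 2) * f w
          = α ^ 2 * f w) →
      (∀ w : ℂ,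
        τ ^ 2 / 4 * deriv (deriv g) w + τ * w * deriv g w + (w ^ 2 + τ / 2) * g w
          = α ^ 2 * g w) →
      f 0 = g 0 → deriv f 0 = deriv g 0 → f = g) := by
  constructor
  · constructor
    · intro heqn
      have hp := key_rep τ hτ α hα f hf heqn
      refine ⟨(-(deriv f 0 * Complex.exp (α ^ 2 / τ)
            - (2 * α / τ) * (f 0 * Complex.exp (α ^ 2 / τ))) / (2 * (2 * α / τ)),
          f 0 * Complex.exp (α ^ 2 / τ)
            + (deriv f 0 * Complex.exp (α ^ 2 / τ)
              - (2 * α / τ) * (f 0 * Complex.exp (α ^ 2 / τ))) / (2 * (2 * α / τ))), hp, ?_⟩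
      intro q hq
      have h3 := gauss_comb_unique τ hτ α hα (fun w => (hq w).symm.trans (hp w))
      exact Prod.ext h3.1 h3.2
    · rintro ⟨p, hp, -⟩
      exact combo_solves τ hτ α p.1 p.2 f (funext hp)
  · intro g hg heqf heqg h0 h1
    funext w
    rw [key_rep τ hτ α hα f hf heqf w, h0, h1, ← key_rep τ hτ α hα g hg heqg w]
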